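/- Let α ∈ (2/3, 1) and for integers i ≥ 1 define p_i = (2/4^i)·((2i−2)!/((i−1)!·(i+1)!))·(2/α − 2)^i·((3α−2)i + 1). Then Σ_{i≥1} p_i = 1 − α. -/

import Mathlib

theorem supercritical_pi_sums_to_one_minus_alpha
    (α : ℝ) (hα0 : 2 / 3 < α) (hα1 : α < 1)
    (p : ℕ → ℝ)
    (hp : ∀ i : ℕ, 1 ≤ i →
      p i = 2 / 4 ^ i *
        ((Nat.factorial (2 * i - 2) : ℝ) /
          ((Nat.factorial (i - 1) : ℝ) * (Nat.factorial (i + 1) : ℝ))) *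
        (2 / α - 2) ^ i * ((3 * α - 2) * (i : ℝ) + 1)) :
    HasSum (fun i : ℕ => p (i + 1)) (1 - α) := by
  have hαpos : (0 : ℝ) < α := lt_trans (by norm_num) hα0
  set x : ℝ := 2 / α - 2 with hxdef
  have hx0 : 0 < x := by
    have : 2 < 2 / α := by
      rw [lt_div_iff₀ hαpos]; nlinarith
    simpa [hxdef] using sub_pos.mpr this
  have hx1 : x < 1 := by
    have : 2 / α < 3 := by
      rw [div_lt_iff₀ hαpos]; nlinarith
    simp only [hxdef]; linarith
  -- the telescoping function
  set F : ℕ → ℝ := fun n =>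
    2 * α * (x / 4) ^ (n + 1) *
      ((Nat.factorial (2 * n) : ℝ) /
        ((Nat.factorial n : ℝ) * (Nat.factorial (n + 1) : ℝ))) with hFdef
  have key : ∀ n : ℕ, p (n + 1) = F n - F (n + 1) := by
    intro n
    have h1 : p (n + 1) = 2 / 4 ^ (n + 1) *
        ((Nat.factorial (2 * n) : ℝ) /
          ((Nat.factorial n : ℝ) * (Nat.factorial (n + 2) : ℝ))) *
        x ^ (n + 1) * ((3 * α - 2) * ((n : ℝ) + 1) + 1) := by
      have := hp (n + 1) (by omega)
      have e1 : 2 * (n + 1) - 2 = 2 * n := by omega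
      have e2 : n + 1 - 1 = n := by omega
      rw [this, e1, e2]
      push_cast
      ring
    have hfn2 : (Nat.factorial (n + 2) : ℝ) = ((n : ℝ) + 2) * Nat.factorial (n + 1) := by
      rw [Nat.factorial_succ]; push_cast; ring
    have hfn1 : (Nat.factorial (n + 1) : ℝ) = ((n : ℝ) + 1) * Nat.factorial n := by
      rw [Nat.factorial_succ]; push_cast; ring
    have h2n : 2 * (n + 1) = 2 * n + 1 + 1 := by omega
    have hf2n : (Nat.factorial (2 * (n + 1)) : ℝ) =
        (2 * (n : ℝ) + 2) * (2 * (n : ℝ) + 1) * Nat.factorial (2 * n) := by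
      rw [h2n, Nat.factorial_succ, Nat.factorial_succ]; push_cast; ring
    have hfpos : ∀ m : ℕ, (0 : ℝ) < (Nat.factorial m : ℝ) := fun m => by
      exact_mod_cast m.factorial_pos
    rw [h1]
    simp only [hFdef]
    rw [hf2n, hfn2, hfn1]
    have hn1 : ((n : ℝ) + 1) ≠ 0 := by positivity
    have hn2 : ((n : ℝ) + 2) ≠ 0 := by positivity
    have hfn : (Nat.factorial n : ℝ) ≠ 0 := ne_of_gt (hfpos n)
    have hf2 : (Nat.factorial (2 * n) : ℝ) ≠ 0 := ne_of_gt (hfpos (2 * n))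
    have hαne : α ≠ 0 := ne_of_gt hαpos
    have hxα : x = (2 - 2 * α) / α := by
      rw [hxdef]; field_simp
    rw [hxα]
    simp only [div_pow, div_div]
    field_simp
    ring
  -- partial sums telescope
  have hpartial : ∀ n : ℕ, ∑ i ∈ Finset.range n, p (i + 1) = F 0 - F n := by
    intro n
    calc ∑ i ∈ Finset.range n, p (i + 1)
        = ∑ i ∈ Finset.range n, (F i - F (i + 1)) := by
          exact Finset.sum_congr rfl fun i _ => key i
      _ = F 0 - F n := by
          rw [Finset.sum_range_sub' F n]
  have hαne : α ≠ 0 := ne_of_gt hαpos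
  have hF0 : F 0 = 1 - α := by
    simp only [hFdef, hxdef]
    norm_num [Nat.factorial]
    field_simp
    ring
  -- F n → 0
  have hQle : ∀ n : ℕ, ((Nat.factorial (2 * n) : ℝ) /
      ((Nat.factorial n : ℝ) * (Nat.factorial (n + 1) : ℝ))) ≤ 4 ^ n := by
    intro n
    have h1 : ((Nat.factorial (2 * n) : ℝ) /
        ((Nat.factorial n : ℝ) * (Nat.factorial (n + 1) : ℝ))) ≤
        ((2 * n).choose n : ℝ) := by
      have hc : ((2 * n).choose n : ℝ) = (Nat.factorial (2 * n) : ℝ) /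
          ((Nat.factorial n : ℝ) * (Nat.factorial n : ℝ)) := by
        rw [Nat.cast_choose ℝ (by omega : n ≤ 2 * n),
          show 2 * n - n = n from by omega]
      rw [hc]
      apply div_le_div_of_nonneg_left
      · positivity
      · positivity
      · have : (Nat.factorial n : ℝ) ≤ (Nat.factorial (n + 1) : ℝ) := by
          exact_mod_cast Nat.factorial_le (by omega)
        nlinarith [show (0:ℝ) < (Nat.factorial n : ℝ) from by exact_mod_cast n.factorial_pos]
    have h2 : ((2 * n).choose n : ℝ) ≤ 4 ^ n := by
      have := Nat.choose_middle_le_pow n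
      have hmono : (2 * n).choose n ≤ (2 * n + 1).choose n :=
        Nat.choose_le_choose n (by omega)
      exact_mod_cast le_trans hmono this
    linarith
  have hQ0 : ∀ n : ℕ, (0 : ℝ) ≤ ((Nat.factorial (2 * n) : ℝ) /
      ((Nat.factorial n : ℝ) * (Nat.factorial (n + 1) : ℝ))) := fun n => by positivity
  have hFle : ∀ n : ℕ, F n ≤ (2 * α * (x / 4)) * x ^ n := by
    intro n
    simp only [hFdef]
    have h1 : (x / 4) ^ (n + 1) = (x / 4) * (x / 4) ^ n := by ring
    rw [h1]
    have h2 : 2 * α * (x / 4 * (x / 4) ^ n) *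
        ((Nat.factorial (2 * n) : ℝ) /
          ((Nat.factorial n : ℝ) * (Nat.factorial (n + 1) : ℝ))) ≤
        2 * α * (x / 4 * (x / 4) ^ n) * 4 ^ n := by
      apply mul_le_mul_of_nonneg_left (hQle n)
      positivity
    calc _ ≤ 2 * α * (x / 4 * (x / 4) ^ n) * 4 ^ n := h2
      _ = (2 * α * (x / 4)) * x ^ n := by
          rw [div_pow]
          field_simp
  have hF0le : ∀ n : ℕ, (0 : ℝ) ≤ F n := fun n => by
    simp only [hFdef]
    have := hQ0 n
    positivity
  have hFtendsto : Filter.Tendsto F Filter.atTop (nhds 0) := by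
    have hgeom : Filter.Tendsto (fun n : ℕ => (2 * α * (x / 4)) * x ^ n)
        Filter.atTop (nhds 0) := by
      have hx : |x| < 1 := by rw [abs_of_pos hx0]; exact hx1
      have := tendsto_pow_atTop_nhds_zero_of_abs_lt_one hx
      simpa using this.const_mul (2 * α * (x / 4))
    exact squeeze_zero hF0le hFle hgeom
  -- conclude
  have hnonneg : ∀ n : ℕ, (0 : ℝ) ≤ p (n + 1) := by
    intro n
    rw [hp (n + 1) (by omega)]
    have h1 : (0 : ℝ) ≤ (3 * α - 2) * ((n : ℝ) + 1) + 1 := by nlinarith [Nat.cast_nonneg (α := ℝ) n]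
    have h2 : (0 : ℝ) ≤ (2 / α - 2) := le_of_lt hx0
    push_cast
    positivity
  rw [hasSum_iff_tendsto_nat_of_nonneg hnonneg]
  have h : Filter.Tendsto (fun n : ℕ => F 0 - F n) Filter.atTop (nhds (F 0 - 0)) :=
    Filter.Tendsto.sub tendsto_const_nhds hFtendsto
  have h2 : (fun n : ℕ => F 0 - F n) = fun n : ℕ => ∑ i ∈ Finset.range n, p (i + 1) :=
    funext fun n => (hpartial n).symm
  rw [h2, hF0, sub_zero] at h
  exact h
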